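/- Every scale group P acting on T_{q+1} admits a P-labelling: there exist bijections c_v from the directed edges out of each vertex v to {0,…,q} satisfying conditions (1), (2) and (3) of the definition of a P-labelling. -/

import Mathlib

namespace Scale

/-- A vertex of the `(q+1)`-regular tree `T_{q+1}`: a level `n ∈ ℤ` together with a
labelling `ℤ → Fin q` which vanishes above the level and for all sufficiently small indices. -/
@[ext] structure Vertex (q : ℕ) where
  level : ℤ
  lab : ℤ → Fin q
  zero_gt : ∀ i : ℤ, level < i → (lab i : ℕ) = 0
  bdd : ∃ N : ℤ, ∀ i : ℤ, i < N → (lab i : ℕ) = 0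

namespace Vertex

variable {q : ℕ} [NeZero q]

/-- The parent `v⁺` of a vertex. -/
def parent (v : Vertex q) : Vertex q where
  level := v.level - 1
  lab := fun i => if v.level - 1 < i then 0 else v.lab i
  zero_gt := by intro i hi; simp [hi]
  bdd := by
    obtain ⟨N, hN⟩ := v.bdd
    refine ⟨N, fun i hi => ?_⟩
    by_cases h : v.level - 1 < i
    · simp [h]
    · simp [h, hN i hi]

/-- The child `vj` of a vertex `v`. -/
def child (v : Vertex q) (j : Fin q) : Vertex q where
  level := v.level + 1
  lab := fun i => if i = v.level + 1 then j else v.lab i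
  zero_gt := by
    intro i hi
    have h1 : i ≠ v.level + 1 := by omega
    simp [h1, v.zero_gt i (by omega)]
  bdd := by
    obtain ⟨N, hN⟩ := v.bdd
    refine ⟨min N (v.level + 1), fun i hi => ?_⟩
    have h1 : i < N := lt_of_lt_of_le hi (min_le_left _ _)
    have h2 : i < v.level + 1 := lt_of_lt_of_le hi (min_le_right _ _)
    have h3 : i ≠ v.level + 1 := by omega
    simp [h3, hN i h1]

/-- The restriction `w|_m` of a vertex to level `m`. -/
def trunc (v : Vertex q) (m : ℤ) : Vertex q where
  level := m
  lab := fun i => if m < i then 0 else v.lab i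
  zero_gt := by intro i hi; simp [hi]
  bdd := by
    obtain ⟨N, hN⟩ := v.bdd
    refine ⟨N, fun i hi => ?_⟩
    by_cases h : m < i
    · simp [h]
    · simp [h, hN i hi]

/-- `w` is a descendant of `u` (in the rooted subtree `T_u`). -/
def Descendant (u w : Vertex q) : Prop := u.level ≤ w.level ∧ trunc w u.level = u

end Vertex

/-- The all-zero vertex `ṽ_n` at level `n`. -/
def zeroVtx (q : ℕ) [NeZero q] (n : ℤ) : Vertex q where
  level := n
  lab := fun _ => 0
  zero_gt := by intro i _; simp
  bdd := ⟨0, by intro i _; simp⟩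

/-- The map shifting all labels by `k` (a translation towards the end `ω` when `k > 0`). -/
def shiftMap {q : ℕ} (k : ℤ) (v : Vertex q) : Vertex q where
  level := v.level + k
  lab := fun i => v.lab (i - k)
  zero_gt := fun i hi => v.zero_gt (i - k) (by omega)
  bdd := by
    obtain ⟨N, hN⟩ := v.bdd
    exact ⟨N + k, fun i hi => hN (i - k) (by omega)⟩

/-- The translation `x̃₀ᵏ` of `T_{q+1}` as a permutation of the vertices. -/
def shiftPerm (q : ℕ) (k : ℤ) : Equiv.Perm (Vertex q) where
  toFun := shiftMap k
  invFun := shiftMap (-k)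
  left_inv := by
    intro v
    refine Vertex.ext ?_ ?_
    · show v.level + k + -k = v.level
      omega
    · funext i
      show v.lab (i - -k - k) = v.lab i
      congr 1
      omega
  right_inv := by
    intro v
    refine Vertex.ext ?_ ?_
    · show v.level + -k + k = v.level
      omega
    · funext i
      show v.lab (i - k - -k) = v.lab i
      congr 1
      omega

/-- The group `Isom(T_{q+1})_ω` of tree automorphisms fixing the distinguished end `ω`,
realised as the subgroup of permutations of the vertex set commuting with `parent`. -/
def IsomOmega (q : ℕ) [NeZero q] : Subgroup (Equiv.Perm (Vertex q)) where
  carrier := {x | ∀ v : Vertex q, x (Vertex.parent v) = Vertex.parent (x v)}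
  one_mem' := fun _ => rfl
  mul_mem' := by
    intro a b ha hb v
    show (a * b) (Vertex.parent v) = Vertex.parent ((a * b) v)
    rw [Equiv.Perm.mul_apply, Equiv.Perm.mul_apply, hb, ha]
  inv_mem' := by
    intro a ha v
    show a⁻¹ (Vertex.parent v) = Vertex.parent (a⁻¹ v)
    have h := ha (a⁻¹ v)
    rw [← Equiv.Perm.mul_apply, mul_inv_cancel, Equiv.Perm.one_apply] at h
    rw [← h]
    rw [← Equiv.Perm.mul_apply, inv_mul_cancel, Equiv.Perm.one_apply]

/-- The level shift `n(x)` of an automorphism (evaluated at the zero vertex; for members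
of `IsomOmega q` the shift is the same at every vertex). -/
def lshift {q : ℕ} [NeZero q] (x : Equiv.Perm (Vertex q)) : ℤ := (x (zeroVtx q 0)).level

/-- An automorphism is elliptic if it fixes a vertex. -/
def Elliptic {q : ℕ} (x : Equiv.Perm (Vertex q)) : Prop := ∃ v : Vertex q, x v = v

/-- Topology of pointwise convergence on `X → X` for `X` discrete. -/
def funTop (X : Type*) : TopologicalSpace (X → X) :=
  @Pi.topologicalSpace X (fun _ => X) (fun _ => ⊥)

/-- The permutation topology on `Equiv.Perm X`: pointwise stabilisers of finite sets of
points form a neighbourhood basis of the identity. -/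
def permTop (X : Type*) : TopologicalSpace (Equiv.Perm X) :=
  @TopologicalSpace.induced (Equiv.Perm X) ((X → X) × (X → X))
    (fun g => ((g : X → X), ((g⁻¹ : Equiv.Perm X) : X → X)))
    (@instTopologicalSpaceProd _ _ (funTop X) (funTop X))

instance (q : ℕ) : TopologicalSpace (Equiv.Perm (Vertex q)) := permTop _

instance (q : ℕ) : TopologicalSpace (Equiv.Perm (List (Fin q))) := permTop _

/-- A scale group: a closed subgroup of `Isom(T_{q+1})_ω` acting transitively on vertices. -/
def IsScaleGroup {q : ℕ} [NeZero q] (P : Subgroup (Equiv.Perm (Vertex q))) : Prop :=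
  P ≤ IsomOmega q ∧ IsClosed (P : Set (Equiv.Perm (Vertex q))) ∧
    ∀ v w : Vertex q, ∃ x ∈ P, x v = w

/-- The stabiliser of the vertex `v` in `P`, as a subgroup of the ambient permutation group. -/
def stabIn {q : ℕ} (P : Subgroup (Equiv.Perm (Vertex q))) (v : Vertex q) :
    Subgroup (Equiv.Perm (Vertex q)) where
  carrier := {g | g ∈ P ∧ g v = v}
  one_mem' := ⟨P.one_mem, rfl⟩
  mul_mem' := by
    intro a b ha hb
    exact ⟨P.mul_mem ha.1 hb.1, by rw [Equiv.Perm.mul_apply, hb.2, ha.2]⟩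
  inv_mem' := by
    intro a ha
    refine ⟨P.inv_mem ha.1, ?_⟩
    rw [Equiv.Perm.inv_eq_iff_eq]
    exact ha.2.symm

/-- The conjugate subgroup `xVx⁻¹`. -/
def conjSub {G : Type*} [Group G] (x : G) (V : Subgroup G) : Subgroup G :=
  V.map (MulAut.conj x).toMonoidHom

/-- The vertex `ξ|_m` on the ray towards the end represented by `ξ`. -/
def ray (q : ℕ) [NeZero q] (ξ : ℤ → Fin q) (N : ℤ) (hξ : ∀ i : ℤ, i < N → (ξ i : ℕ) = 0)
    (m : ℤ) : Vertex q where
  level := m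
  lab := fun i => if m < i then 0 else ξ i
  zero_gt := by intro i hi; simp [hi]
  bdd := by
    refine ⟨N, fun i hi => ?_⟩
    by_cases h : m < i
    · simp [h]
    · simp [h, hξ i hi]

/-- The contraction group of `x` in `P`. -/
def conSet {q : ℕ} (P : Subgroup (Equiv.Perm (Vertex q))) (x : Equiv.Perm (Vertex q)) :
    Set (Equiv.Perm (Vertex q)) :=
  {g | g ∈ P ∧ ∀ v : Vertex q, ∃ N : ℕ, ∀ n : ℕ, N ≤ n → (x ^ n * g * (x ^ n)⁻¹) v = v}


/-- `c` is a `P`-labelling of `T_{q+1}` with distinguished bi-infinite path `vp`: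
each `c v` is a bijection from the directed edges out of `v` (encoded as the
neighbours of `v`) to `{0, …, q}`; the edge towards the parent is labelled `q`;
along the path `vp` the downward edges are labelled `0`; and `P` contains, for
all `u₁, u₂`, an element carrying `u₁` to `u₂` and preserving the labels on the
rooted subtree of descendants of `u₁`. -/
def IsPLabelling {q : ℕ} [NeZero q] (P : Subgroup (Equiv.Perm (Vertex q)))
    (c : Vertex q → Vertex q → Fin (q + 1)) (vp : ℤ → Vertex q) : Prop :=
  (∀ v : Vertex q, ∀ j : Fin (q + 1),
      ∃! w : Vertex q, (Vertex.parent w = v ∨ w = Vertex.parent v) ∧ c v w = j) ∧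
  (∀ v : Vertex q, (c v (Vertex.parent v) : ℕ) = q) ∧
  (∀ n : ℤ, Vertex.parent (vp (n + 1)) = vp n) ∧
  (∀ n : ℤ, (c (vp n) (vp (n + 1)) : ℕ) = 0) ∧
  (∀ u₁ u₂ : Vertex q, ∃ x, x ∈ P ∧ x u₁ = u₂ ∧
    ∀ w w' : Vertex q, Vertex.Descendant u₁ w → Vertex.Descendant u₁ w' →
      (Vertex.parent w = w' ∨ Vertex.parent w' = w) → c (x w) (x w') = c w w')

open Classical in
/-- The standard labelling of `T_{q+1}`: the edge from `v` to its child `vj` is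
labelled `j` and the edge towards the parent is labelled `q`. -/
noncomputable def stdLabel (q : ℕ) [NeZero q] : Vertex q → Vertex q → Fin (q + 1) :=
  fun v w =>
    if Vertex.parent w = v then Fin.castLE (Nat.le_succ q) (w.lab (v.level + 1))
    else Fin.last q

/-- Convert an edge label in `{0,…,q}` known to be `< q` into a letter in `{0,…,q-1}`. -/
def toFinQ {q : ℕ} [NeZero q] (j : Fin (q + 1)) : Fin q :=
  if h : (j : ℕ) < q then ⟨j, h⟩ else ⟨0, Nat.pos_of_ne_zero (NeZero.ne q)⟩

/-- The string of labels read along the downward path of length `d` ending at `w`. -/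
def labelString {q : ℕ} [NeZero q] (c : Vertex q → Vertex q → Fin (q + 1)) :
    Vertex q → ℕ → List (Fin q)
  | _, 0 => []
  | w, (d + 1) => labelString c (Vertex.parent w) d ++ [toFinQ (c (Vertex.parent w) w)]

/-- The isomorphism `φ^c_v : T_v → T_{q,q}` given by a labelling `c`: a descendant `w`
of `v` is sent to the string of labels along the path from `v` down to `w`. -/
def phiStr {q : ℕ} [NeZero q] (c : Vertex q → Vertex q → Fin (q + 1)) (v w : Vertex q) :
    List (Fin q) :=
  labelString c w ((w.level - v.level).toNat)

/-- The set `P|_v = {φ^c_{x(v)} ∘ x ∘ (φ^c_v)⁻¹ : x ∈ P}` of sections of elements of `P`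
at the vertex `v`, with respect to the labelling `c`. -/
def sectSet {q : ℕ} [NeZero q] (P : Subgroup (Equiv.Perm (Vertex q)))
    (c : Vertex q → Vertex q → Fin (q + 1)) (v : Vertex q) :
    Set (Equiv.Perm (List (Fin q))) :=
  {g | ∃ x, x ∈ P ∧ ∀ w : Vertex q, Vertex.Descendant v w →
        g (phiStr c v w) = phiStr c (x v) (x w)}

/-- The standard isomorphism `φ_v : T_v → T_{q,q}`: a descendant `w` of `v` of level `m`
is sent to the string `(w_{n+1}, …, w_m)` where `n` is the level of `v`. -/
def stdStr {q : ℕ} (v w : Vertex q) : List (Fin q) :=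
  (List.range (w.level - v.level).toNat).map fun k => w.lab (v.level + 1 + k)

/-- The set `{φ_{x(v)} ∘ x ∘ φ_v⁻¹ : x ∈ P}` with respect to the standard isomorphisms. -/
def stdSect {q : ℕ} [NeZero q] (P : Subgroup (Equiv.Perm (Vertex q))) (v : Vertex q) :
    Set (Equiv.Perm (List (Fin q))) :=
  {g | ∃ x, x ∈ P ∧ ∀ w : Vertex q, Vertex.Descendant v w →
        g (stdStr v w) = stdStr (x v) (x w)}

/-- `Isom(T_{q,q})`: the group of permutations of the set of finite strings over
`{0,…,q-1}` preserving length and the prefix relation. -/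
def RIsom (q : ℕ) : Subgroup (Equiv.Perm (List (Fin q))) where
  carrier := {g | (∀ l : List (Fin q), (g l).length = l.length) ∧
    ∀ l₁ l₂ : List (Fin q), l₁ <+: l₂ → g l₁ <+: g l₂}
  one_mem' := ⟨fun _ => rfl, fun _ _ h => h⟩
  mul_mem' := by
    intro a b ha hb
    constructor
    · intro l
      rw [Equiv.Perm.mul_apply, ha.1, hb.1]
    · intro l₁ l₂ h
      rw [Equiv.Perm.mul_apply, Equiv.Perm.mul_apply]
      exact ha.2 _ _ (hb.2 _ _ h)
  inv_mem' := by
    intro a ha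
    have hlen : ∀ l : List (Fin q), (a⁻¹ l).length = l.length := by
      intro l
      have h := ha.1 (a⁻¹ l)
      rw [← Equiv.Perm.mul_apply, mul_inv_cancel, Equiv.Perm.one_apply] at h
      exact h.symm
    refine ⟨hlen, ?_⟩
    intro l₁ l₂ h
    have htake : List.take (a⁻¹ l₁).length (a⁻¹ l₂) <+: a⁻¹ l₂ := List.take_prefix _ _
    have h2 : a (List.take (a⁻¹ l₁).length (a⁻¹ l₂)) <+: a (a⁻¹ l₂) := ha.2 _ _ htake
    rw [← Equiv.Perm.mul_apply, mul_inv_cancel, Equiv.Perm.one_apply] at h2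
    have hle : l₁.length ≤ l₂.length := h.length_le
    have hlen3 : (a (List.take (a⁻¹ l₁).length (a⁻¹ l₂))).length = l₁.length := by
      rw [ha.1, List.length_take, hlen, hlen]
      omega
    have hpre : a (List.take (a⁻¹ l₁).length (a⁻¹ l₂)) <+: l₁ :=
      List.prefix_of_prefix_length_le h2 h (le_of_eq hlen3)
    have heq : a (List.take (a⁻¹ l₁).length (a⁻¹ l₂)) = l₁ := hpre.eq_of_length hlen3
    have heq2 : List.take (a⁻¹ l₁).length (a⁻¹ l₂) = a⁻¹ l₁ := by
      apply a.injective
      rw [heq]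
      rw [← Equiv.Perm.mul_apply, mul_inv_cancel, Equiv.Perm.one_apply]
    rw [← heq2]
    exact List.take_prefix _ _

/-- A subgroup of `Isom(T_{q,q})` is self-replicating if it is self-similar, transitive
on level 1, and all the section homomorphisms `g ↦ g|_w` are surjective. -/
def SelfReplicating {q : ℕ} (G : Subgroup (Equiv.Perm (List (Fin q)))) : Prop :=
  (∀ w : List (Fin q), ∀ g, g ∈ G → g w = w →
      ∃ g', g' ∈ G ∧ ∀ v : List (Fin q), g (w ++ v) = w ++ g' v) ∧
  (∀ j j' : Fin q, ∃ g ∈ G, g [j] = [j']) ∧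
  (∀ w : List (Fin q), ∀ g', g' ∈ G →
      ∃ g, g ∈ G ∧ g w = w ∧ ∀ v : List (Fin q), g (w ++ v) = w ++ g' v)

/-- The stabiliser of the string `w` in `G ≤ Isom(T_{q,q})`, as a subgroup of `G`. -/
def rstab {q : ℕ} (G : Subgroup (Equiv.Perm (List (Fin q)))) (w : List (Fin q)) :
    Subgroup G where
  carrier := {g | (g : Equiv.Perm (List (Fin q))) w = w}
  one_mem' := rfl
  mul_mem' := by
    intro a b ha hb
    show ((a * b : G) : Equiv.Perm (List (Fin q))) w = w
    rw [Subgroup.coe_mul, Equiv.Perm.mul_apply]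
    rw [show (b : Equiv.Perm (List (Fin q))) w = w from hb,
      show (a : Equiv.Perm (List (Fin q))) w = w from ha]
  inv_mem' := by
    intro a ha
    show ((a⁻¹ : G) : Equiv.Perm (List (Fin q))) w = w
    rw [Subgroup.coe_inv, Equiv.Perm.inv_eq_iff_eq]
    exact (show (a : Equiv.Perm (List (Fin q))) w = w from ha).symm


set_option linter.unusedSectionVars false
namespace Aux
open Vertex

variable {q : ℕ} [NeZero q]

lemma fin_eq_zero {a : Fin q} (h : (a : ℕ) = 0) : a = 0 := by
  apply Fin.ext; simp [h]

lemma perm_apply_inv_self {α : Type*} (e : Equiv.Perm α) (x : α) : e (e⁻¹ x) = x :=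
  e.apply_symm_apply x

lemma perm_inv_apply_self {α : Type*} (e : Equiv.Perm α) (x : α) : e⁻¹ (e x) = x :=
  e.symm_apply_apply x

@[simp] lemma level_parent (w : Vertex q) : w.parent.level = w.level - 1 := rfl
@[simp] lemma level_child (w : Vertex q) (j : Fin q) : (w.child j).level = w.level + 1 := rfl
@[simp] lemma level_trunc (w : Vertex q) (m : ℤ) : (w.trunc m).level = m := rfl
@[simp] lemma level_zeroVtx (n : ℤ) : (zeroVtx q n).level = n := rfl

lemma trunc_self (w : Vertex q) : w.trunc w.level = w := by
  refine Vertex.ext rfl ?_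
  funext i
  show (if w.level < i then (0 : Fin q) else w.lab i) = w.lab i
  by_cases h : w.level < i
  · rw [if_pos h, fin_eq_zero (w.zero_gt i h)]
  · rw [if_neg h]

lemma trunc_trunc (w : Vertex q) {m m' : ℤ} (h : m' ≤ m) :
    (w.trunc m).trunc m' = w.trunc m' := by
  refine Vertex.ext rfl ?_
  funext i
  show (if m' < i then (0 : Fin q) else if m < i then (0:Fin q) else w.lab i) = (if m' < i then (0:Fin q) else w.lab i)
  by_cases h1 : m' < i
  · simp [h1]
  · have h2 : ¬ m < i := by omega
    simp [h1, h2]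

lemma parent_eq_trunc (w : Vertex q) : w.parent = w.trunc (w.level - 1) := rfl

lemma parent_trunc (w : Vertex q) (m : ℤ) : (w.trunc m).parent = w.trunc (m - 1) := by
  rw [parent_eq_trunc (w.trunc m)]
  exact trunc_trunc w (show m - 1 ≤ m by omega)

lemma trunc_zeroVtx (n m : ℤ) : (zeroVtx q n).trunc m = zeroVtx q m := by
  refine Vertex.ext rfl ?_
  funext i
  show (if m < i then (0:Fin q) else 0) = 0
  simp

lemma parent_zeroVtx (n : ℤ) : (zeroVtx q n).parent = zeroVtx q (n - 1) := by
  rw [parent_eq_trunc]; exact trunc_zeroVtx n (n-1)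

lemma trunc_eq_zeroVtx (w : Vertex q) {m N : ℤ} (hN : ∀ i : ℤ, i < N → (w.lab i : ℕ) = 0)
    (h : m < N) : w.trunc m = zeroVtx q m := by
  refine Vertex.ext rfl ?_
  funext i
  show (if m < i then (0:Fin q) else w.lab i) = 0
  by_cases h1 : m < i
  · simp [h1]
  · simp [h1]; exact fin_eq_zero (hN i (by omega))

lemma parent_child (w : Vertex q) (j : Fin q) : (w.child j).parent = w := by
  refine Vertex.ext (by show w.level + 1 - 1 = w.level; omega) ?_
  funext i
  show (if w.level + 1 - 1 < i then (0 : Fin q) else if i = w.level + 1 then j else w.lab i) = w.lab i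
  by_cases h1 : w.level < i
  · have h0 : w.level + 1 - 1 < i := by omega
    rw [if_pos h0, fin_eq_zero (w.zero_gt i h1)]
  · have h2 : ¬ (w.level + 1 - 1 < i) := by omega
    have h3 : i ≠ w.level + 1 := by omega
    rw [if_neg h2, if_neg h3]

lemma child_lab (w : Vertex q) (j : Fin q) : (w.child j).lab (w.level + 1) = j := by
  show (if w.level + 1 = w.level + 1 then j else w.lab (w.level+1)) = j
  simp

lemma eq_child_of_parent {u w : Vertex q} (h : w.parent = u) :
    w = u.child (w.lab (u.level + 1)) := by
  subst h
  have hl : w.level - 1 + 1 = w.level := by omega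
  refine Vertex.ext (by show w.level = w.level - 1 + 1; omega) ?_
  funext i
  show w.lab i = if i = w.level - 1 + 1 then w.lab (w.level - 1 + 1)
    else if w.level - 1 < i then 0 else w.lab i
  rw [hl]
  by_cases h1 : i = w.level
  · simp [h1]
  · simp only [h1, if_false]
    by_cases h2 : w.level - 1 < i
    · have : w.level < i := by omega
      simp [h2, fin_eq_zero (w.zero_gt i this)]
    · simp [h2]

lemma child_inj {u : Vertex q} {j j' : Fin q} (h : u.child j = u.child j') : j = j' := by
  have h1 := child_lab u j
  rw [h, child_lab] at h1
  exact h1.symm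

lemma trunc_child (w : Vertex q) (j : Fin q) {m : ℤ} (hm : m ≤ w.level) :
    (w.child j).trunc m = w.trunc m := by
  refine Vertex.ext rfl ?_
  funext i
  show (if m < i then (0 : Fin q) else if i = w.level + 1 then j else w.lab i)
    = (if m < i then (0 : Fin q) else w.lab i)
  by_cases h1 : m < i
  · simp [h1]
  · have h3 : i ≠ w.level + 1 := by omega
    simp [h1, h3]

lemma desc_refl (u : Vertex q) : Descendant u u := ⟨le_refl _, trunc_self u⟩

lemma desc_trans {u w z : Vertex q} (h1 : Descendant u w) (h2 : Descendant w z) :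
    Descendant u z := by
  refine ⟨le_trans h1.1 h2.1, ?_⟩
  have := trunc_trunc z (m := w.level) (m' := u.level) h1.1
  rw [h2.2] at this
  rw [← this, h1.2]

lemma desc_trunc {u w : Vertex q} (h : Descendant u w) {m : ℤ} (h1 : u.level ≤ m)
    (h2 : m ≤ w.level) : Descendant u (w.trunc m) := by
  refine ⟨h1, ?_⟩
  show (w.trunc m).trunc u.level = u
  rw [trunc_trunc w h1, h.2]

lemma desc_of_trunc {w : Vertex q} {m : ℤ} (h : m ≤ w.level) : Descendant (w.trunc m) w :=
  ⟨h, rfl⟩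

lemma desc_child {u w : Vertex q} (h : Descendant u w) (j : Fin q) :
    Descendant u (w.child j) := by
  refine ⟨by have := h.1; simp; omega, ?_⟩
  show (w.child j).trunc u.level = u
  rw [trunc_child w j h.1, h.2]

-- Isometry lemmas

lemma mem_isom {g : Equiv.Perm (Vertex q)} :
    g ∈ IsomOmega q ↔ ∀ v : Vertex q, g v.parent = (g v).parent := Iff.rfl

lemma parent_iter_trunc (w : Vertex q) (k : ℕ) :
    Vertex.parent^[k] w = w.trunc (w.level - k) := by
  induction k generalizing w with
  | zero => simp [trunc_self]
  | succ n ih =>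
    rw [Function.iterate_succ_apply, ih, parent_eq_trunc w]
    rw [show ((w.trunc (w.level - 1)).level - (n:ℤ)) = w.level - 1 - n from by simp]
    rw [trunc_trunc w (show w.level - 1 - (n:ℤ) ≤ w.level - 1 by omega)]
    congr 1
    push_cast
    ring

lemma isom_parent_iter {g : Equiv.Perm (Vertex q)} (hg : g ∈ IsomOmega q) (w : Vertex q)
    (k : ℕ) : g (Vertex.parent^[k] w) = Vertex.parent^[k] (g w) := by
  induction k generalizing w with
  | zero => rfl
  | succ n ih =>
    rw [Function.iterate_succ_apply', Function.iterate_succ_apply', hg, ih]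

lemma isom_delta {g : Equiv.Perm (Vertex q)} (hg : g ∈ IsomOmega q) (w : Vertex q) {m : ℤ}
    (hm : m ≤ w.level) : (g (w.trunc m)).level - m = (g w).level - w.level := by
  have hk : w.level - (w.level - m).toNat = m := by omega
  have h1 := isom_parent_iter hg w (w.level - m).toNat
  rw [parent_iter_trunc, parent_iter_trunc, hk] at h1
  have h2 : (g (w.trunc m)).level = (g w).level - (w.level - m).toNat := by
    rw [h1]; simp
  omega

lemma isom_level {g : Equiv.Perm (Vertex q)} (hg : g ∈ IsomOmega q) (w : Vertex q) :
    (g w).level = w.level + lshift g := by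
  obtain ⟨N, hN⟩ := w.bdd
  set m := min (min N w.level) 0 - 1 with hm
  have hm1 : m ≤ w.level := by omega
  have hm2 : m < N := by omega
  have hm3 : m ≤ 0 := by omega
  have h1 : w.trunc m = zeroVtx q m := trunc_eq_zeroVtx w hN hm2
  have h2 : (zeroVtx q 0).trunc m = zeroVtx q m := trunc_zeroVtx 0 m
  have d1 := isom_delta hg w hm1
  have d2 := isom_delta hg (zeroVtx q 0) (m := m) (by simp [hm3])
  rw [h1] at d1
  rw [h2] at d2
  simp only [level_zeroVtx] at d2
  unfold lshift
  omega

lemma isom_trunc {g : Equiv.Perm (Vertex q)} (hg : g ∈ IsomOmega q) (w : Vertex q) {m : ℤ}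
    (hm : m ≤ w.level) : g (w.trunc m) = (g w).trunc (m + lshift g) := by
  have hk : w.level - (w.level - m).toNat = m := by omega
  have h1 := isom_parent_iter hg w (w.level - m).toNat
  rw [parent_iter_trunc, parent_iter_trunc, hk] at h1
  rw [h1]
  congr 1
  rw [isom_level hg w]
  omega

lemma isom_desc {g : Equiv.Perm (Vertex q)} (hg : g ∈ IsomOmega q) {u w : Vertex q}
    (h : Descendant u w) : Descendant (g u) (g w) := by
  have h1 := h.1
  refine ⟨?_, ?_⟩
  · rw [isom_level hg u, isom_level hg w]; omega
  · show (g w).trunc (g u).level = g u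
    rw [isom_level hg u, ← isom_trunc hg w h.1, h.2]

lemma lshift_one : lshift (1 : Equiv.Perm (Vertex q)) = 0 := rfl

lemma lshift_mul {g h : Equiv.Perm (Vertex q)} (hg : g ∈ IsomOmega q) :
    lshift (g * h) = lshift g + lshift h := by
  have h1 : lshift (g * h) = (g (h (zeroVtx q 0))).level := rfl
  rw [h1, isom_level hg (h (zeroVtx q 0))]
  have h2 : lshift h = (h (zeroVtx q 0)).level := rfl
  rw [h2]; ring

lemma lshift_inv {g : Equiv.Perm (Vertex q)} (hg : g ∈ IsomOmega q) :
    lshift g⁻¹ = - lshift g := by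
  have h1 := isom_level hg (g⁻¹ (zeroVtx q 0))
  rw [perm_apply_inv_self] at h1
  simp only [level_zeroVtx] at h1
  have h2 : lshift g⁻¹ = (g⁻¹ (zeroVtx q 0)).level := rfl
  omega

lemma lshift_zpow {g : Equiv.Perm (Vertex q)} (hg : g ∈ IsomOmega q) (n : ℤ) :
    lshift (g ^ n) = n * lshift g := by
  induction n using Int.induction_on with
  | zero => simp [lshift_one]
  | succ k ih =>
    rw [zpow_add, zpow_one, lshift_mul ((IsomOmega q).zpow_mem hg k), ih]
    push_cast; ring
  | pred k ih =>
    have he : g ^ (-(k:ℤ) - 1) = g ^ (-(k:ℤ)) * g⁻¹ := by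
      rw [← zpow_neg_one g, ← zpow_add]
      congr 1
    rw [he, lshift_mul ((IsomOmega q).zpow_mem hg (-(k:ℤ))), lshift_inv hg, ih]
    ring

lemma child_zeroVtx (n : ℤ) : (zeroVtx q n).child 0 = zeroVtx q (n + 1) := by
  refine Vertex.ext rfl ?_
  funext i
  show (if i = n + 1 then (0 : Fin q) else 0) = 0
  simp

lemma lshift_eq_zero {g : Equiv.Perm (Vertex q)} (hg : g ∈ IsomOmega q) {a b : Vertex q}
    (h : g a = b) (hl : a.level = b.level) : lshift g = 0 := by
  have := isom_level hg a
  rw [h] at this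
  omega

lemma perm_zpow_apply (g : Equiv.Perm (Vertex q)) (a b : ℤ) (w : Vertex q) :
    (g ^ a) ((g ^ b) w) = (g ^ (b + a)) w := by
  rw [← Equiv.Perm.mul_apply, ← zpow_add]
  congr 1
  ring

/-- All data needed for the construction. -/
structure Setup (q : ℕ) [NeZero q] where
  P : Subgroup (Equiv.Perm (Vertex q))
  x : Equiv.Perm (Vertex q)
  sg : Vertex q → Vertex q → Equiv.Perm (Vertex q)
  hP : P ≤ IsomOmega q
  hx : x ∈ P
  hx1 : x (zeroVtx q 0) = zeroVtx q 1
  hsgmem : ∀ a b, sg a b ∈ P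
  hsg : ∀ a b, (sg a b) a = b

namespace Setup

variable (S : Setup q)

lemma hx' : S.x ∈ IsomOmega q := S.hP S.hx

lemma hxz (k : ℤ) : S.x ^ k ∈ IsomOmega q := (IsomOmega q).zpow_mem S.hx' k

lemma hsg' (a b : Vertex q) : S.sg a b ∈ IsomOmega q := S.hP (S.hsgmem a b)

lemma lshift_x : lshift S.x = 1 := by
  have : lshift S.x = (S.x (zeroVtx q 0)).level := rfl
  rw [this, S.hx1]; rfl

lemma lshift_xz (k : ℤ) : lshift (S.x ^ k) = k := by
  rw [lshift_zpow S.hx', S.lshift_x, mul_one]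

/-- The spine (distinguished bi-infinite path). -/
noncomputable def spine (n : ℤ) : Vertex q := (S.x ^ n) (zeroVtx q 0)

lemma spine_zpow (k n : ℤ) : (S.x ^ k) (S.spine n) = S.spine (n + k) := by
  unfold spine
  rw [add_comm, zpow_add]
  rfl

lemma spine_level (n : ℤ) : (S.spine n).level = n := by
  unfold spine
  rw [isom_level (S.hxz n), S.lshift_xz]
  simp

lemma spine_zero : S.spine 0 = zeroVtx q 0 := by
  unfold spine; rw [zpow_zero]; rfl

lemma spine_one : S.spine 1 = zeroVtx q 1 := by
  unfold spine; rw [zpow_one]; exact S.hx1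

lemma spine_parent (n : ℤ) : (S.spine n).parent = S.spine (n - 1) := by
  have h0 : (zeroVtx q 0 : Vertex q).parent = zeroVtx q (-1) := by
    rw [parent_zeroVtx]; norm_num
  have h1 : S.x (zeroVtx q (-1)) = zeroVtx q 0 := by
    have h := (mem_isom.mp S.hx') (zeroVtx q 0)
    rw [S.hx1, parent_zeroVtx, parent_zeroVtx] at h
    norm_num at h
    exact h
  have h2 : (S.x ^ n) ((zeroVtx q 0 : Vertex q).parent) = S.spine (n - 1) := by
    rw [h0]
    have : (S.x ^ (n-1)) (S.x (zeroVtx q (-1))) = S.spine (n-1) := by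
      rw [h1]; rfl
    rw [← this]
    have hcomp : S.x ^ n = S.x ^ (n - 1) * S.x := by
      rw [← zpow_add_one]; congr 1; ring
    rw [hcomp, Equiv.Perm.mul_apply]
  rw [← h2]
  exact ((mem_isom.mp (S.hxz n)) (zeroVtx q 0)).symm

lemma spine_nonpos (n : ℤ) (hn : n ≤ 0) : S.spine n = zeroVtx q n := by
  have key : ∀ k : ℕ, S.spine (-(k:ℤ)) = zeroVtx q (-(k:ℤ)) := by
    intro k
    induction k with
    | zero => simpa using S.spine_zero
    | succ m ih =>
      have := S.spine_parent (-(m:ℤ))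
      rw [ih, parent_zeroVtx] at this
      rw [show (-(↑(m+1):ℤ)) = -(m:ℤ) - 1 by push_cast; ring, ← this]
  have := key (-n).toNat
  rwa [show (-((-n).toNat:ℤ)) = n by omega] at this

lemma spine_trunc {m n : ℤ} (h : m ≤ n) : (S.spine n).trunc m = S.spine m := by
  have hk : ∀ k : ℕ, (S.spine n).trunc (n - k) = S.spine (n - k) := by
    intro k
    induction k with
    | zero =>
      have h := trunc_self (S.spine n)
      rw [spine_level] at h
      simpa using h
    | succ j ih =>
      have h1 := S.spine_parent (n - j)
      rw [parent_eq_trunc (S.spine (n-j)), spine_level] at h1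
      rw [← ih, trunc_trunc _ (show n - (j:ℤ) - 1 ≤ n - j by omega)] at h1
      rw [show (n - (↑(j+1):ℤ)) = n - j - 1 by push_cast; ring, h1]
  have := hk (n - m).toNat
  rwa [show n - ((n - m).toNat:ℤ) = m by omega] at this

lemma spine_desc {m n : ℤ} (h : m ≤ n) : Descendant (S.spine m) (S.spine n) := by
  refine ⟨by rw [spine_level, spine_level]; exact h, ?_⟩
  show (S.spine n).trunc (S.spine m).level = S.spine m
  rw [spine_level, spine_trunc S h]

lemma attach_exists (w : Vertex q) :
    ∃ k : ℕ, w.trunc (w.level - k) = S.spine (w.level - k) := by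
  obtain ⟨N, hN⟩ := w.bdd
  set m := min (min N w.level) 0 - 1 with hm
  refine ⟨(w.level - m).toNat, ?_⟩
  have h1 : w.level - ((w.level - m).toNat : ℤ) = m := by omega
  rw [h1, trunc_eq_zeroVtx w hN (by omega), S.spine_nonpos m (by omega)]

/-- `attach w` : the level where `w` meets the spine. -/
noncomputable def attach (w : Vertex q) : ℤ :=
  w.level - @Nat.find _ (Classical.decPred _) (S.attach_exists w)

lemma attach_le (w : Vertex q) : S.attach w ≤ w.level := by
  unfold attach; omega

lemma attach_spec (w : Vertex q) : w.trunc (S.attach w) = S.spine (S.attach w) :=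
  @Nat.find_spec _ (Classical.decPred _) (S.attach_exists w)

lemma le_attach {w : Vertex q} {n : ℤ} (h1 : n ≤ w.level) (h2 : w.trunc n = S.spine n) :
    n ≤ S.attach w := by
  by_contra hc
  push_neg at hc
  have hk : ((w.level - n).toNat) < @Nat.find _ (Classical.decPred _) (S.attach_exists w) := by
    unfold attach at hc; omega
  have := @Nat.find_min (fun k => w.trunc (w.level - k) = S.spine (w.level - k))
    (Classical.decPred _) (S.attach_exists w) ((w.level - n).toNat) hk
  rw [show w.level - ((w.level - n).toNat : ℤ) = n by omega] at this
  exact this h2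

lemma attach_spine (n : ℤ) : S.attach (S.spine n) = n := by
  have h1 : S.attach (S.spine n) ≤ n := by
    have := S.attach_le (S.spine n); rwa [spine_level] at this
  have h2 : n ≤ S.attach (S.spine n) := by
    have ht : (S.spine n).trunc n = S.spine n := by
      have h := trunc_self (S.spine n); rwa [spine_level] at h
    exact S.le_attach (le_of_eq (S.spine_level n).symm) ht
  omega

lemma attach_zpow (w : Vertex q) (k : ℤ) : S.attach ((S.x ^ k) w) = S.attach w + k := by
  have half : ∀ (z : Vertex q) (j : ℤ), S.attach z + j ≤ S.attach ((S.x ^ j) z) := by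
    intro z j
    refine S.le_attach ?_ ?_
    · rw [isom_level (S.hxz j), S.lshift_xz]
      have := S.attach_le z; omega
    · have h1 := isom_trunc (S.hxz j) z (m := S.attach z) (S.attach_le z)
      rw [S.lshift_xz, S.attach_spec, spine_zpow] at h1
      exact h1.symm
  have h1 := half w k
  have h2 := half ((S.x ^ k) w) (-k)
  rw [show (S.x ^ (-k)) ((S.x ^ k) w) = w from ?_] at h2
  · omega
  · rw [← Equiv.Perm.mul_apply, ← zpow_add]
    simp

/-- Base point of the x-orbit of w : representative with attach = 0. -/
noncomputable def bse (w : Vertex q) : Vertex q := (S.x ^ (-(S.attach w))) w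

lemma bse_attach (w : Vertex q) : S.attach (S.bse w) = 0 := by
  unfold bse; rw [S.attach_zpow]; ring

lemma bse_level (w : Vertex q) : (S.bse w).level = w.level - S.attach w := by
  unfold bse; rw [isom_level (S.hxz _), S.lshift_xz]; ring

lemma bse_eq {w : Vertex q} (h : S.attach w = 0) : S.bse w = w := by
  unfold bse; rw [h]; simp

lemma bse_zpow (w : Vertex q) (k : ℤ) : S.bse ((S.x ^ k) w) = S.bse w := by
  unfold bse
  rw [S.attach_zpow w k, ← Equiv.Perm.mul_apply, ← zpow_add,
    show -(S.attach w + k) + k = -S.attach w by ring]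

/-- One step of the recursion defining the labelling. -/
noncomputable def psi (w : Vertex q) : Vertex q :=
  S.bse ((S.sg (S.spine 1) (w.trunc 1))⁻¹ w)

lemma psi_spec {w : Vertex q} (h0 : S.attach w = 0) (h2 : 2 ≤ w.level) :
    S.attach (S.psi w) = 0 ∧ 0 ≤ (S.psi w).level ∧ (S.psi w).level < w.level := by
  set c := w.trunc 1 with hc
  set s := S.sg (S.spine 1) c with hs
  have hsmem : s ∈ IsomOmega q := S.hsg' _ _
  have hsinv : s⁻¹ ∈ IsomOmega q := (IsomOmega q).inv_mem hsmem
  have hsc : s (S.spine 1) = c := S.hsg _ _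
  have hls : lshift s = 0 := lshift_eq_zero hsmem hsc (by rw [spine_level, hc, level_trunc])
  set u := s⁻¹ w with hu
  have hulev : u.level = w.level := by
    rw [hu, isom_level hsinv, lshift_inv hsmem, hls]; ring
  have hdesc : Descendant c w := ⟨by rw [hc, level_trunc]; omega, by rw [hc, level_trunc]⟩
  have hinvc : s⁻¹ c = S.spine 1 := by rw [← hsc, perm_inv_apply_self]
  have hdesc2 : Descendant (S.spine 1) u := by
    have := isom_desc hsinv hdesc
    rwa [hinvc] at this
  have htr : u.trunc 1 = S.spine 1 := by
    have := hdesc2.2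
    rwa [spine_level] at this
  have ha : 1 ≤ S.attach u := S.le_attach (by omega) htr
  have hb : S.attach u ≤ u.level := S.attach_le u
  have hpsi : S.psi w = S.bse u := rfl
  refine ⟨by rw [hpsi]; exact S.bse_attach u, ?_, ?_⟩
  · rw [hpsi, S.bse_level]; omega
  · rw [hpsi, S.bse_level]; omega

/-- The label function, defined with fuel. -/
noncomputable def ellF (S : Setup q) : ℕ → Vertex q → Fin q
  | 0, w => if w.level = 1 then w.lab 1 else 0
  | (k+1), w => if w.level = 1 then w.lab 1 else if w.level ≤ 0 then 0 else S.ellF k (S.psi w)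

lemma ellF_low {w : Vertex q} (h : w.level ≤ 1) (k : ℕ) :
    S.ellF k w = if w.level = 1 then w.lab 1 else 0 := by
  cases k with
  | zero => rfl
  | succ n =>
    by_cases h1 : w.level = 1
    · simp [ellF, h1]
    · have h2 : w.level ≤ 0 := by omega
      simp [ellF, h1, h2]

lemma ellF_step {w : Vertex q} (h2 : 2 ≤ w.level) (k : ℕ) :
    S.ellF (k+1) w = S.ellF k (S.psi w) := by
  simp [ellF, show w.level ≠ 1 by omega, show ¬ w.level ≤ 0 by omega]

lemma ellF_stable : ∀ n : ℕ, ∀ w : Vertex q, S.attach w = 0 → w.level.toNat ≤ n →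
    S.ellF n w = S.ellF w.level.toNat w := by
  intro n
  induction n using Nat.strong_induction_on with
  | _ n ih =>
    intro w h0 hn
    have hw0 : 0 ≤ w.level := by have := S.attach_le w; omega
    by_cases hl : w.level ≤ 1
    · rw [S.ellF_low hl n, S.ellF_low hl _]
    · push_neg at hl
      have hl2 : 2 ≤ w.level := by omega
      obtain ⟨hp0, hp1, hp2⟩ := S.psi_spec h0 hl2
      cases n with
      | zero => omega
      | succ m =>
        set t := w.level.toNat - 1 with hts
        have ht : w.level.toNat = t + 1 := by omega
        have e1 : S.ellF (m+1) w = S.ellF m (S.psi w) := S.ellF_step hl2 m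
        have e2 : S.ellF w.level.toNat w = S.ellF t (S.psi w) := by
          rw [ht]; exact S.ellF_step hl2 t
        rw [e1, e2, ih m (by omega) _ hp0 (by omega), ih t (by omega) _ hp0 (by omega)]

/-- The letter of a vertex: the label of the edge from its parent. -/
noncomputable def ell (w : Vertex q) : Fin q := S.ellF (S.bse w).level.toNat (S.bse w)

lemma ell_eq_ellF {w : Vertex q} (h0 : S.attach w = 0) :
    S.ell w = S.ellF w.level.toNat w := by
  unfold ell; rw [S.bse_eq h0]

lemma ell_zpow (w : Vertex q) (k : ℤ) : S.ell ((S.x ^ k) w) = S.ell w := by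
  unfold ell; rw [S.bse_zpow]

lemma ell_spine (n : ℤ) : S.ell (S.spine n) = 0 := by
  have h1 : S.bse (S.spine n) = S.spine 0 := by
    unfold bse
    rw [S.attach_spine, S.spine_zpow, show n + -n = 0 by ring]
  unfold ell
  rw [h1, S.spine_zero]
  simp [ellF]

lemma ell_one {w : Vertex q} (h0 : S.attach w = 0) (h1 : w.level = 1) :
    S.ell w = w.lab 1 := by
  rw [S.ell_eq_ellF h0, h1]
  show S.ellF 1 w = w.lab 1
  rw [S.ellF_low (by omega) 1, if_pos h1]

lemma ell_psi {w : Vertex q} (h0 : S.attach w = 0) (h2 : 2 ≤ w.level) :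
    S.ell w = S.ell ((S.sg (S.spine 1) (w.trunc 1))⁻¹ w) := by
  obtain ⟨hp0, hp1, hp2⟩ := S.psi_spec h0 h2
  rw [S.ell_eq_ellF h0]
  set t := w.level.toNat - 1 with hts
  have ht : w.level.toNat = t + 1 := by omega
  have e1 : S.ellF w.level.toNat w = S.ellF t (S.psi w) := by
    rw [ht]; exact S.ellF_step h2 t
  rw [e1, S.ellF_stable t _ hp0 (by omega)]
  rfl

lemma level_of_parent {u w : Vertex q} (h : w.parent = u) : u.level = w.level - 1 := by
  rw [← h]; rfl

lemma trunc_of_parent {u w : Vertex q} (h : w.parent = u) : w.trunc u.level = u := by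
  rw [level_of_parent h, ← parent_eq_trunc, h]

lemma attach_child_zero {u w : Vertex q} (h0 : S.attach u = 0) (hl : 1 ≤ u.level)
    (h : w.parent = u) : S.attach w = 0 := by
  have hwl : u.level = w.level - 1 := level_of_parent h
  have htr : w.trunc u.level = u := trunc_of_parent h
  have hu0 : u.trunc 0 = S.spine 0 := by
    have := S.attach_spec u; rwa [h0] at this
  have hge : 0 ≤ S.attach w := by
    refine S.le_attach (by omega) ?_
    rw [← trunc_trunc w (show (0:ℤ) ≤ u.level by omega), htr, hu0]
  have hle : S.attach w ≤ 0 := by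
    by_contra hc
    push_neg at hc
    have haw := S.attach_le w
    have hspec := S.attach_spec w
    by_cases hca : S.attach w ≤ u.level
    · have : u.trunc (S.attach w) = S.spine (S.attach w) := by
        rw [← htr, trunc_trunc w hca]; exact hspec
      have := S.le_attach (w := u) (by omega) this
      omega
    · have haw2 : S.attach w = w.level := by omega
      have hws : w = S.spine w.level := by
        have h1 : w.trunc w.level = S.spine w.level := by rw [← haw2]; exact hspec
        rw [← h1, trunc_self w]
      have h2 : u = S.spine (w.level - 1) := by
        have h3 : w.parent = S.spine (w.level - 1) := by
          conv_lhs => rw [hws]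
          rw [S.spine_parent]
        rw [← h, h3]
      have h4 : S.attach u = w.level - 1 := by rw [h2, S.attach_spine]
      omega
  omega

lemma attach_child_spine {w : Vertex q} {n : ℤ} (h : w.parent = S.spine n)
    (hw : w ≠ S.spine (n + 1)) : S.attach w = n := by
  have hl : n = w.level - 1 := by
    have := level_of_parent h; rwa [spine_level] at this
  have htr : w.trunc n = S.spine n := by
    have := trunc_of_parent h; rwa [spine_level] at this
  have hge : n ≤ S.attach w := S.le_attach (by omega) htr
  have hle : S.attach w ≤ n := by
    by_contra hc
    push_neg at hc
    have haw := S.attach_le w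
    have hmx : S.attach w = n + 1 := by omega
    have hspec := S.attach_spec w
    rw [hmx] at hspec
    rw [show n + 1 = w.level by omega] at hspec
    rw [trunc_self w] at hspec
    rw [show w.level = n + 1 by omega] at hspec
    exact hw hspec
  omega

lemma sc_pres {c : Vertex q} (hc1 : c.level = 1) (hc0 : S.attach c = 0) :
    ∀ z : Vertex q, Descendant (S.spine 1) z → 1 < z.level →
      S.ell ((S.sg (S.spine 1) c) z) = S.ell z := by
  intro z hdz hlz
  set s := S.sg (S.spine 1) c with hsdef
  have hsmem : s ∈ IsomOmega q := S.hsg' _ _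
  have hsc : s (S.spine 1) = c := S.hsg _ _
  have hls : lshift s = 0 := lshift_eq_zero hsmem hsc (by rw [spine_level, hc1])
  set w := s z with hw
  have hwlev : w.level = z.level := by rw [hw, isom_level hsmem, hls, add_zero]
  have hdw : Descendant c w := by
    have := isom_desc hsmem hdz
    rwa [hsc] at this
  have htr1 : w.trunc 1 = c := by
    have := hdw.2
    rwa [hc1] at this
  have hcne : c ≠ S.spine 1 := by
    intro hcc
    rw [hcc, S.attach_spine] at hc0
    omega
  have hge : 0 ≤ S.attach w := by
    refine S.le_attach (by omega) ?_
    have h1 : c.trunc 0 = S.spine 0 := by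
      have := S.attach_spec c; rwa [hc0] at this
    rw [← trunc_trunc w (show (0:ℤ) ≤ 1 by omega), htr1, h1]
  have hle : S.attach w ≤ 0 := by
    by_contra hcon
    push_neg at hcon
    have hspec := S.attach_spec w
    have h1 : w.trunc 1 = S.spine 1 := by
      rw [← trunc_trunc w (show (1:ℤ) ≤ S.attach w by omega), hspec,
        S.spine_trunc (show (1:ℤ) ≤ S.attach w by omega)]
    exact hcne (by rw [← htr1, h1])
  have h0 : S.attach w = 0 := by omega
  have hkey := S.ell_psi h0 (by omega)
  rw [htr1] at hkey
  rw [hkey, hw, ← hsdef, perm_inv_apply_self]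

lemma trans_exists : ∀ t : ℕ, ∀ u : Vertex q, (u.level - S.attach u).toNat = t →
    ∃ s, s ∈ S.P ∧ s (S.spine u.level) = u ∧
      ∀ z : Vertex q, Descendant (S.spine u.level) z → u.level < z.level →
        S.ell (s z) = S.ell z := by
  intro t
  induction t using Nat.strong_induction_on with
  | _ t ih =>
    intro u ht
    have hle := S.attach_le u
    by_cases h0 : S.attach u = u.level
    · have hus : u = S.spine u.level := by
        have h1 := S.attach_spec u
        rwa [h0, trunc_self u] at h1
      refine ⟨1, S.P.one_mem, ?_, fun z _ _ => rfl⟩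
      show S.spine u.level = u
      exact hus.symm
    · have hlt : S.attach u < u.level := by omega
      set n := S.attach u with hn
      set u' := S.bse u with hu'
      have h0' : S.attach u' = 0 := S.bse_attach u
      have hlev' : u'.level = u.level - n := by rw [hu', S.bse_level]
      have hxu : (S.x ^ n) u' = u := by
        rw [hu']
        unfold bse
        rw [perm_zpow_apply, show -S.attach u + n = 0 by omega]
        simp
      by_cases hl1 : u'.level = 1
      · set s' := S.sg (S.spine 1) u' with hs'
        have hpres := S.sc_pres hl1 h0'
        refine ⟨S.x ^ n * s' * S.x ^ (-n), ?_, ?_, ?_⟩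
        · exact S.P.mul_mem (S.P.mul_mem (S.P.zpow_mem S.hx n) (S.hsgmem _ _))
            (S.P.zpow_mem S.hx (-n))
        · rw [Equiv.Perm.mul_apply, Equiv.Perm.mul_apply, S.spine_zpow,
            show u.level + -n = 1 by omega]
          rw [show s' (S.spine 1) = u' from S.hsg _ _]
          exact hxu
        · intro z hdz hlz
          rw [Equiv.Perm.mul_apply, Equiv.Perm.mul_apply, S.ell_zpow]
          set z' := (S.x ^ (-n)) z with hz'
          have hdz' : Descendant (S.spine 1) z' := by
            have := isom_desc (S.hxz (-n)) hdz
            rwa [S.spine_zpow, show u.level + -n = 1 by omega] at this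
          have hlz' : 1 < z'.level := by
            rw [hz', isom_level (S.hxz (-n)), S.lshift_xz]; omega
          rw [hpres z' hdz' hlz', hz', S.ell_zpow]
      · have hl0 : 1 ≤ u'.level := by omega
        have hl2 : 2 ≤ u'.level := by omega
        set c := u'.trunc 1 with hc
        set sc := S.sg (S.spine 1) c with hscdef
        have hclev : c.level = 1 := rfl
        have hcne : c ≠ S.spine 1 := by
          intro hcc
          have h1 : (1:ℤ) ≤ S.attach u' := S.le_attach (by omega) (by rw [← hc, hcc])
          omega
        have hc0 : S.attach c = 0 := by
          have hge : 0 ≤ S.attach c := by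
            refine S.le_attach (by rw [hclev]; omega) ?_
            have h1 : u'.trunc 0 = S.spine 0 := by
              have := S.attach_spec u'; rwa [h0'] at this
            rw [hc, trunc_trunc u' (show (0:ℤ) ≤ 1 by omega), h1]
          have hle2 : S.attach c ≤ 1 := by
            have := S.attach_le c; rwa [hclev] at this
          have hne1 : S.attach c ≠ 1 := by
            intro hcc
            have hspec := S.attach_spec c
            rw [hcc, show (1:ℤ) = c.level from hclev.symm, trunc_self c, hclev] at hspec
            exact hcne hspec
          omega
        have hscmem : sc ∈ IsomOmega q := S.hsg' _ _
        have hscinv : sc⁻¹ ∈ IsomOmega q := (IsomOmega q).inv_mem hscmem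
        have hscc : sc (S.spine 1) = c := S.hsg _ _
        have hlsc : lshift sc = 0 := lshift_eq_zero hscmem hscc (by rw [spine_level, hclev])
        set z1 := sc⁻¹ u' with hz1
        have hz1lev : z1.level = u'.level := by
          rw [hz1, isom_level hscinv, lshift_inv hscmem, hlsc]; ring
        have hdesc : Descendant c u' := ⟨by rw [hclev]; omega, by rw [hclev, hc]⟩
        have hinvc : sc⁻¹ c = S.spine 1 := by rw [← hscc, perm_inv_apply_self]
        have hdz1 : Descendant (S.spine 1) z1 := by
          have := isom_desc hscinv hdesc
          rwa [hinvc] at this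
        have ha : 1 ≤ S.attach z1 := by
          refine S.le_attach (by rw [hz1lev]; omega) ?_
          have := hdz1.2
          rwa [spine_level] at this
        have haz := S.attach_le z1
        set u'' := S.bse z1 with hu''
        have h0'' : S.attach u'' = 0 := S.bse_attach z1
        have hlev'' : u''.level = u'.level - S.attach z1 := by
          rw [hu'', S.bse_level, hz1lev]
        have hless : (u''.level - S.attach u'').toNat < t := by
          rw [h0'']
          omega
        obtain ⟨s'', hs''P, hs''map, hs''pres⟩ := ih _ hless u'' rfl
        have hs''mem : s'' ∈ IsomOmega q := S.hP hs''P
        have hls'' : lshift s'' = 0 :=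
          lshift_eq_zero hs''mem hs''map (by rw [spine_level])
        have hxa : (S.x ^ (S.attach z1)) u'' = z1 := by
          rw [hu'']
          unfold bse
          rw [perm_zpow_apply, show -S.attach z1 + S.attach z1 = 0 by ring]
          simp
        refine ⟨S.x ^ n * sc * S.x ^ (S.attach z1) * s'' * S.x ^ (u''.level - u.level),
          ?_, ?_, ?_⟩
        · refine S.P.mul_mem (S.P.mul_mem (S.P.mul_mem (S.P.mul_mem
            (S.P.zpow_mem S.hx n) (S.hsgmem _ _)) (S.P.zpow_mem S.hx _)) hs''P)
            (S.P.zpow_mem S.hx _)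
        · rw [Equiv.Perm.mul_apply, Equiv.Perm.mul_apply, Equiv.Perm.mul_apply,
            Equiv.Perm.mul_apply, S.spine_zpow,
            show u.level + (u''.level - u.level) = u''.level by ring,
            hs''map, hxa, hz1, perm_apply_inv_self]
          exact hxu
        · intro z hdz hlz
          rw [Equiv.Perm.mul_apply, Equiv.Perm.mul_apply, Equiv.Perm.mul_apply,
            Equiv.Perm.mul_apply, S.ell_zpow]
          set z2 := (S.x ^ (u''.level - u.level)) z with hz2
          have hdz2 : Descendant (S.spine u''.level) z2 := by
            have := isom_desc (S.hxz (u''.level - u.level)) hdz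
            rwa [S.spine_zpow, show u.level + (u''.level - u.level) = u''.level by ring] at this
          have hlz2 : u''.level < z2.level := by
            rw [hz2, isom_level (S.hxz _), S.lshift_xz]; omega
          set y := (S.x ^ (S.attach z1)) (s'' z2) with hy
          have hdy : Descendant z1 y := by
            have hd1 : Descendant u'' (s'' z2) := by
              have := isom_desc hs''mem hdz2
              rwa [hs''map] at this
            have := isom_desc (S.hxz (S.attach z1)) hd1
            rwa [hxa] at this
          have hdy2 : Descendant (S.spine 1) y := desc_trans hdz1 hdy
          have hly : 1 < y.level := by
            have h1 := hdy.1
            rw [hz1lev] at h1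
            omega
          have hell2 : S.ell (sc y) = S.ell y := S.sc_pres hclev hc0 y hdy2 hly
          rw [hell2, hy, S.ell_zpow, hs''pres z2 hdz2 hlz2, hz2, S.ell_zpow]

end Setup

/-- The induced permutation of child indices. -/
noncomputable def locA (g : Equiv.Perm (Vertex q)) (u : Vertex q) (j : Fin q) : Fin q :=
  (g (u.child j)).lab ((g u).level + 1)

lemma locA_spec {g : Equiv.Perm (Vertex q)} (hg : g ∈ IsomOmega q) (u : Vertex q) (j : Fin q) :
    g (u.child j) = (g u).child (locA g u j) := by
  have h : (g (u.child j)).parent = g u := by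
    rw [← mem_isom.mp hg (u.child j), parent_child]
  exact eq_child_of_parent h

lemma locA_bij {g : Equiv.Perm (Vertex q)} (hg : g ∈ IsomOmega q) (u : Vertex q) :
    Function.Bijective (locA g u) := by
  have hinj : Function.Injective (locA g u) := by
    intro j j' hjj
    have h1 := locA_spec hg u j
    rw [hjj, ← locA_spec hg u j'] at h1
    exact child_inj (g.injective h1)
  exact Finite.injective_iff_bijective.mp hinj

namespace Setup

variable (S : Setup q)

/-- The labelling of the children of `u`. -/
noncomputable def beta (u : Vertex q) (j : Fin q) : Fin q := S.ell (u.child j)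

lemma beta_transport {g : Equiv.Perm (Vertex q)} (hg : g ∈ IsomOmega q) (u : Vertex q)
    (hell : ∀ j, S.ell (g (u.child j)) = S.ell (u.child j)) :
    S.beta u = S.beta (g u) ∘ locA g u := by
  funext j
  show S.ell (u.child j) = S.ell ((g u).child (locA g u j))
  rw [← locA_spec hg u j, hell j]

lemma beta_bij_F : ∀ t : ℕ, ∀ u : Vertex q, S.attach u = 0 → u.level.toNat = t →
    Function.Bijective (S.beta u) := by
  intro t
  induction t using Nat.strong_induction_on with
  | _ t ih =>
    intro u h0 ht
    have hu0 : 0 ≤ u.level := by have := S.attach_le u; omega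
    by_cases hl0 : u.level = 0
    · -- u = spine 0
      have hus : u = S.spine 0 := by
        have h1 := S.attach_spec u
        rw [h0] at h1
        have h2 : u.trunc 0 = u := by rw [← hl0]; exact trunc_self u
        rw [← h2, h1]
      have hid : S.beta u = fun j => j := by
        funext j
        by_cases hj : j = 0
        · subst hj
          show S.ell (u.child 0) = 0
          rw [hus, S.spine_zero, child_zeroVtx, show (0:ℤ)+1 = 1 from rfl, ← S.spine_one]
          exact S.ell_spine 1
        · show S.ell (u.child j) = j
          have hne : u.child j ≠ S.spine 1 := by
            intro hcontra
            have h1 := child_lab u j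
            rw [hcontra, hl0] at h1
            rw [S.spine_one] at h1
            exact hj (by rw [← h1]; rfl)
          have hpar : (u.child j).parent = S.spine 0 := by rw [parent_child, hus]
          have hat : S.attach (u.child j) = 0 :=
            S.attach_child_spine hpar (by rwa [zero_add])
          have hlev : (u.child j).level = 1 := by
            show u.level + 1 = 1; omega
          rw [S.ell_one hat hlev, show (1:ℤ) = u.level + 1 by omega, child_lab]
      rw [hid]
      exact Function.bijective_id
    · have hl1 : 1 ≤ u.level := by omega
      set c := u.trunc 1 with hcdef
      set s := S.sg (S.spine 1) c with hsdef
      have hsmem : s ∈ IsomOmega q := S.hsg' _ _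
      have hsinv : s⁻¹ ∈ IsomOmega q := (IsomOmega q).inv_mem hsmem
      have hsc : s (S.spine 1) = c := S.hsg _ _
      have hls : lshift s = 0 := lshift_eq_zero hsmem hsc (by rw [spine_level]; rfl)
      have hat : ∀ j, S.attach (u.child j) = 0 := fun j =>
        S.attach_child_zero h0 hl1 (parent_child u j)
      have htrc : ∀ j : Fin q, (u.child j).trunc 1 = c := fun j => trunc_child u j hl1
      have hell : ∀ j, S.ell (s⁻¹ (u.child j)) = S.ell (u.child j) := by
        intro j
        have := S.ell_psi (hat j) (show 2 ≤ (u.child j).level by show 2 ≤ u.level + 1; omega)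
        rw [htrc j] at this
        exact this.symm
      have hb1 : S.beta u = S.beta (s⁻¹ u) ∘ locA s⁻¹ u := S.beta_transport hsinv u hell
      set z := s⁻¹ u with hzdef
      have hzlev : z.level = u.level := by
        rw [hzdef, isom_level hsinv, lshift_inv hsmem, hls]; ring
      have hinvc : s⁻¹ c = S.spine 1 := by rw [← hsc, perm_inv_apply_self]
      have hdesc : Descendant c u := ⟨by rw [hcdef, level_trunc]; omega, by rw [hcdef, level_trunc]⟩
      have hdesc2 : Descendant (S.spine 1) z := by
        have := isom_desc hsinv hdesc
        rwa [hinvc] at this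
      have haz : 1 ≤ S.attach z := by
        refine S.le_attach (by omega) ?_
        have := hdesc2.2
        rwa [spine_level] at this
      have hb2 : S.beta z = S.beta (S.bse z) ∘ locA (S.x ^ (-(S.attach z))) z := by
        have := S.beta_transport (S.hxz (-(S.attach z))) z (fun j => S.ell_zpow _ _)
        exact this
      have hbase0 : S.attach (S.bse z) = 0 := S.bse_attach z
      have hbaselev : (S.bse z).level = u.level - S.attach z := by rw [S.bse_level, hzlev]
      have hless : (S.bse z).level.toNat < t := by
        have h1 : 0 ≤ (S.bse z).level := by have := S.attach_le (S.bse z); rw [hbase0] at this; omega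
        omega
      have hbij : Function.Bijective (S.beta (S.bse z)) := ih _ hless _ hbase0 rfl
      rw [hb1, hb2]
      exact (hbij.comp (locA_bij (S.hxz _) z)).comp (locA_bij hsinv u)

lemma beta_bij (u : Vertex q) : Function.Bijective (S.beta u) := by
  have h := S.beta_bij_F ((S.bse u).level.toNat) (S.bse u) (S.bse_attach u) rfl
  have hb : S.beta u = S.beta ((S.x ^ (-(S.attach u))) u) ∘ locA (S.x ^ (-(S.attach u))) u :=
    S.beta_transport (S.hxz _) u (fun j => S.ell_zpow _ _)
  rw [hb]
  exact h.comp (locA_bij (S.hxz _) u)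

open Classical in
/-- The labelling constructed from `ell`. -/
noncomputable def lbl (v w : Vertex q) : Fin (q + 1) :=
  if w.parent = v then Fin.castLE (Nat.le_succ q) (S.ell w) else Fin.last q

lemma parent_parent_ne (v : Vertex q) : v.parent.parent ≠ v := by
  intro h
  have := congrArg Vertex.level h
  simp only [level_parent] at this
  omega

lemma lbl_parent (v : Vertex q) : (S.lbl v v.parent : ℕ) = q := by
  unfold lbl
  rw [if_neg (parent_parent_ne v)]
  simp

lemma lbl_child (v w : Vertex q) (h : w.parent = v) :
    (S.lbl v w : ℕ) = (S.ell w : ℕ) := by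
  unfold lbl
  rw [if_pos h]
  simp

lemma lbl_exu (v : Vertex q) (j : Fin (q + 1)) :
    ∃! w : Vertex q, (w.parent = v ∨ w = v.parent) ∧ S.lbl v w = j := by
  by_cases hj : (j : ℕ) < q
  · obtain ⟨i, hi⟩ := (S.beta_bij v).2 ⟨(j : ℕ), hj⟩
    refine ⟨v.child i, ⟨Or.inl (parent_child v i), ?_⟩, ?_⟩
    · apply Fin.ext
      rw [S.lbl_child v _ (parent_child v i)]
      have h2 : S.ell (v.child i) = ⟨(j : ℕ), hj⟩ := hi
      rw [h2]
    · rintro w ⟨hor, hlbl⟩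
      rcases hor with hpar | hpar
      · have hval : (S.ell w : ℕ) = (j : ℕ) := by
          rw [← S.lbl_child v w hpar, hlbl]
        have hell : S.ell w = ⟨(j : ℕ), hj⟩ := Fin.ext hval
        have hw : w = v.child (w.lab (v.level + 1)) := eq_child_of_parent hpar
        have hbeq : S.beta v (w.lab (v.level + 1)) = S.beta v i := by
          show S.ell (v.child (w.lab (v.level + 1))) = S.ell (v.child i)
          rw [← hw, hell]
          exact hi.symm
        have := (S.beta_bij v).1 hbeq
        rw [hw, this]
      · exfalso
        have : (S.lbl v w : ℕ) = q := by rw [hpar]; exact S.lbl_parent v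
        rw [hlbl] at this
        omega
  · have hjq : (j : ℕ) = q := by have := j.isLt; omega
    refine ⟨v.parent, ⟨Or.inr rfl, ?_⟩, ?_⟩
    · apply Fin.ext
      rw [S.lbl_parent v, hjq]
    · rintro w ⟨hor, hlbl⟩
      rcases hor with hpar | hpar
      · exfalso
        have h1 : (S.lbl v w : ℕ) = (S.ell w : ℕ) := S.lbl_child v w hpar
        have h2 := (S.ell w).isLt
        rw [hlbl, hjq] at h1
        omega
      · exact hpar

lemma main : IsPLabelling S.P S.lbl S.spine := by
  refine ⟨S.lbl_exu, S.lbl_parent, ?_, ?_, ?_⟩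
  · intro n
    rw [S.spine_parent (n + 1)]
    congr 1
    ring
  · intro n
    have hpar : (S.spine (n + 1)).parent = S.spine n := by
      rw [S.spine_parent (n + 1)]; congr 1; ring
    rw [S.lbl_child _ _ hpar, S.ell_spine]
    simp
  · intro u₁ u₂
    obtain ⟨s₁, h1P, h1map, h1pres⟩ := S.trans_exists _ u₁ rfl
    obtain ⟨s₂, h2P, h2map, h2pres⟩ := S.trans_exists _ u₂ rfl
    have h1mem : s₁ ∈ IsomOmega q := S.hP h1P
    have h2mem : s₂ ∈ IsomOmega q := S.hP h2P
    have h1inv : s₁⁻¹ ∈ IsomOmega q := (IsomOmega q).inv_mem h1mem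
    have hls1 : lshift s₁ = 0 := lshift_eq_zero h1mem h1map (S.spine_level u₁.level)
    have hinv1 : s₁⁻¹ u₁ = S.spine u₁.level := by
      conv_lhs => rw [← h1map]
      rw [perm_inv_apply_self]
    set Δ : ℤ := u₂.level - u₁.level with hΔ
    set y := s₂ * S.x ^ Δ * s₁⁻¹ with hy
    have hyP : y ∈ S.P := S.P.mul_mem (S.P.mul_mem h2P (S.P.zpow_mem S.hx Δ)) (S.P.inv_mem h1P)
    have hymem : y ∈ IsomOmega q := S.hP hyP
    have hyu : y u₁ = u₂ := by
      rw [hy, Equiv.Perm.mul_apply, Equiv.Perm.mul_apply, hinv1, S.spine_zpow,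
        show u₁.level + Δ = u₂.level by omega, h2map]
    have hypres : ∀ z : Vertex q, Descendant u₁ z → u₁.level < z.level →
        S.ell (y z) = S.ell z := by
      intro z hdz hlz
      have hdz' : Descendant (S.spine u₁.level) (s₁⁻¹ z) := by
        have := isom_desc h1inv hdz
        rwa [hinv1] at this
      have hlz' : u₁.level < (s₁⁻¹ z).level := by
        rw [isom_level h1inv, lshift_inv h1mem, hls1]
        omega
      have he1 : S.ell (s₁⁻¹ z) = S.ell z := by
        have h := h1pres _ hdz' hlz'
        rw [perm_apply_inv_self] at h
        exact h.symm
      have hdz'' : Descendant (S.spine u₂.level) ((S.x ^ Δ) (s₁⁻¹ z)) := by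
        have := isom_desc (S.hxz Δ) hdz'
        rwa [S.spine_zpow, show u₁.level + Δ = u₂.level by omega] at this
      have hlz'' : u₂.level < ((S.x ^ Δ) (s₁⁻¹ z)).level := by
        rw [isom_level (S.hxz Δ), S.lshift_xz]
        omega
      have he3 : S.ell (s₂ ((S.x ^ Δ) (s₁⁻¹ z))) = S.ell ((S.x ^ Δ) (s₁⁻¹ z)) :=
        h2pres _ hdz'' hlz''
      have hyz : y z = s₂ ((S.x ^ Δ) (s₁⁻¹ z)) := by
        rw [hy, Equiv.Perm.mul_apply, Equiv.Perm.mul_apply]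
      rw [hyz, he3, S.ell_zpow, he1]
    refine ⟨y, hyP, hyu, ?_⟩
    intro w w' hdw hdw' hadj
    rcases hadj with hpar | hpar
    · -- parent w = w' : the edge goes up; both labels are `last q`
      have hne : ¬ w'.parent = w := by
        intro hcon
        have l1 := level_of_parent hpar
        have l2 := level_of_parent hcon
        omega
      have hne2 : ¬ (y w').parent = y w := by
        intro hcon
        rw [← mem_isom.mp hymem w'] at hcon
        exact hne (y.injective hcon)
      unfold lbl
      rw [if_neg hne, if_neg hne2]
    · -- parent w' = w : w' is a child of w
      have hlw' : u₁.level < w'.level := by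
        have l1 := level_of_parent hpar
        have := hdw.1
        omega
      have hpar2 : (y w').parent = y w := by
        rw [← mem_isom.mp hymem w', hpar]
      unfold lbl
      rw [if_pos hpar, if_pos hpar2]
      congr 1
      exact hypres w' hdw' hlw'

end Setup

end Aux
end Scale

open Scale in
/-- Every scale group admits a `P`-labelling. -/
theorem statement_8 (q : ℕ) [NeZero q] (hq : 2 ≤ q)
    (P : Subgroup (Equiv.Perm (Vertex q))) (hP : IsScaleGroup P) :
    ∃ (c : Vertex q → Vertex q → Fin (q + 1)) (vp : ℤ → Vertex q),
      IsPLabelling P c vp := by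
  obtain ⟨hle, _hcl, htr⟩ := hP
  obtain ⟨x, hxP, hx1⟩ := htr (zeroVtx q 0) (zeroVtx q 1)
  choose σ hσ1 hσ2 using htr
  let S : Scale.Aux.Setup q := ⟨P, x, σ, hle, hxP, hx1, hσ1, hσ2⟩
  exact ⟨S.lbl, S.spine, S.main⟩
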